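/- Let M be a timelike surface in ℝ^{n,1} with canonical null direction Z. Then the normal vector field Z^⊥ is parallel in the normal bundle if and only if M is minimal and II(Z^⊤, Z^⊤) = 0. -/
import Mathlib


/-- Z^⊥ is parallel in the normal bundle iff M is minimal (H = -II(Z^⊤,W) = 0)
and II(Z^⊤,Z^⊤) = 0. -/
theorem stmt9
    (Mp T Nv : Type)
    [AddCommGroup T] [Module (Mp → ℝ) T]
    [AddCommGroup Nv] [Module (Mp → ℝ) Nv]
    -- the induced (Lorentzian) metric on tangent fields and the (Riemannian) metric on normal fields
    (g : T → T → Mp → ℝ) (gN : Nv → Nv → Mp → ℝ)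
    -- Levi-Civita connection of M, normal connection, second fundamental form, shape operator
    (D : T → T → T) (Dn : T → Nv → Nv)
    (II : T → T → Nv) (A : Nv → T → T)
    -- action of vector fields on functions, Lie bracket, gradient
    (d : T → (Mp → ℝ) → Mp → ℝ) (lie : T → T → T) (grad : (Mp → ℝ) → T)
    -- the tangent and normal parts of Z and the lightlike field W
    (ZT W : T) (ZP : Nv)
    (g_symm : ∀ X Y, g X Y = g Y X)
    (gN_symm : ∀ μ ν, gN μ ν = gN ν μ)
    (gN_def : ∀ ν : Nv, gN ν ν = 0 → ν = 0)
    (II_symm : ∀ X Y, II X Y = II Y X)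
    (shape : ∀ ν X Y, g (A ν X) Y = gN (II X Y) ν)
    (metr : ∀ X Y Y', d X (g Y Y') = g (D X Y) Y' + g Y (D X Y'))
    (metrN : ∀ X μ ν, d X (gN μ ν) = gN (Dn X μ) ν + gN μ (Dn X ν))
    (tors : ∀ X Y, lie X Y = D X Y - D Y X)
    (dconst : ∀ X (c : ℝ), d X (fun _ => c) = 0)
    (grad_def : ∀ h X, g (grad h) X = d X h)
    -- (Z^⊤, W) is a frame of lightlike tangent fields with ⟨Z^⊤, W⟩ = -1
    (frame : ∀ v : T, v = (-(g v W)) • ZT + (-(g v ZT)) • W)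
    (hZT : g ZT ZT = 0) (hZTne : ZT ≠ 0)
    (hW : g W W = 0) (hWne : W ≠ 0)
    (hZTW : g ZT W = fun _ => (-1 : ℝ))
    -- Z is unit spacelike, so Z^⊥ is a unit normal field
    (hZP : gN ZP ZP = fun _ => (1 : ℝ))
    -- the compatibility equations coming from Z being a constant vector field
    (compat1 : ∀ X, D X ZT = A ZP X)
    (compat2 : ∀ X, Dn X ZP = -(II ZT X))
    -- Codazzi equation (the ambient space is flat)
    (codazzi : ∀ X Y Y', Dn X (II Y Y') - II (D X Y) Y' - II Y (D X Y')
        = Dn Y (II X Y') - II (D Y X) Y' - II X (D Y Y')) :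
    (∀ X, Dn X ZP = 0) ↔ (-(II ZT W) = (0 : Nv) ∧ II ZT ZT = 0) := by

  -- g of the zero tangent vector vanishes
  have hg0 : ∀ X, g 0 X = 0 := by
    have he : ∀ X, g (grad (fun _ => (0:ℝ))) X = 0 := by
      intro X
      rw [grad_def]
      exact dconst X 0
    have he0 : grad (fun _ => (0:ℝ)) = 0 := by
      have := frame (grad (fun _ => (0:ℝ)))
      rw [he W, he ZT] at this
      simpa using this
    intro X
    rw [← he0]
    exact he X
  -- gN of the zero normal vector vanishes
  have hgN0 : ∀ ν, gN 0 ν = 0 := by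
    have h1 : ∀ X ν, gN (II X 0) ν = 0 := by
      intro X ν
      rw [← shape]
      rw [g_symm]
      exact hg0 _
    have h2 : II ZT 0 = 0 := gN_def _ (h1 ZT (II ZT 0))
    intro ν
    rw [← h2]
    exact h1 ZT ν
  constructor
  · intro h
    constructor
    · rw [← compat2 W]; exact h W
    · have := (compat2 ZT).symm.trans (h ZT)
      exact neg_eq_zero.mp this
  · rintro ⟨h1, h2⟩ X
    have hW0 : II ZT W = 0 := neg_eq_zero.mp h1
    set ν := II ZT X with hν
    have hA : A ν ZT = 0 := by
      have e1 : g (A ν ZT) W = 0 := by rw [shape, hW0]; exact hgN0 ν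
      have e2 : g (A ν ZT) ZT = 0 := by rw [shape, h2]; exact hgN0 ν
      have := frame (A ν ZT)
      rw [e1, e2] at this
      simpa using this
    have hνν : gN ν ν = 0 := by
      have := shape ν ZT X
      rw [hA, hg0] at this
      exact this.symm
    have : ν = 0 := gN_def ν hνν
    rw [compat2 X, ← hν, this, neg_zero]
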